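/- arXiv:2405.15510 — 2 statements merged into one kernel-verified Lean document; each statement's English description precedes it below -/
import Mathlib

section
/- Let M ⊆ L be a primitive sublattice of a lattice L, and let v ∈ M be a primitive vector of M. Then div(v, L) = γ if and only if v is a primitive element of the lattice γL^∨ (where γL^∨ is viewed as a lattice inside L ⊗ ℚ containing γL). -/
open Pointwise

/-- The dual lattice `L^∨ ⊆ L ⊗ ℚ = V`, as a set:
all vectors pairing integrally with every element of `L`. -/
def dualSet {V : Type*} [AddCommGroup V] [Module ℚ V]
    (B : V →ₗ[ℚ] V →ₗ[ℚ] ℚ) (L : Submodule ℤ V) : Set V :=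
  {x | ∀ l ∈ L, ∃ n : ℤ, B x l = (n : ℚ)}

/-- `v` is a primitive vector of `S`: it lies in `S` and is not a nontrivial
integer multiple of another vector of `S`. -/
def PrimVec {V : Type*} [AddCommGroup V] [Module ℚ V] (S : Set V) (v : V) : Prop :=
  v ∈ S ∧ ∀ (n : ℤ) (w : V), w ∈ S → v = n • w → IsUnit n

/-- `M` is a primitive sublattice of `L`: `M ≤ L` and `L/M` is torsion-free. -/
def PrimSub {V : Type*} [AddCommGroup V] [Module ℚ V] (M L : Submodule ℤ V) : Prop :=
  M ≤ L ∧ ∀ (n : ℤ), n ≠ 0 → ∀ x ∈ L, n • x ∈ M → x ∈ M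

/-- `div(v, L) = γ`: `γ` is the positive generator of the ideal `b(v, L) ⊆ ℤ`. -/
def DivIs {V : Type*} [AddCommGroup V] [Module ℚ V]
    (B : V →ₗ[ℚ] V →ₗ[ℚ] ℚ) (L : Submodule ℤ V) (v : V) (γ : ℤ) : Prop :=
  (∀ l ∈ L, ∃ k : ℤ, B v l = (γ : ℚ) * (k : ℚ)) ∧ ∃ l ∈ L, B v l = (γ : ℚ)


/-- for `v` a primitive vector of a primitive sublattice `M ⊆ L`,
`div(v, L) = γ` iff `v` is a primitive element of the lattice `γL^∨`. -/
theorem stmt_2 {V : Type*} [AddCommGroup V] [Module ℚ V]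
    (B : V →ₗ[ℚ] V →ₗ[ℚ] ℚ)
    (hsymm : ∀ x y, B x y = B y x)
    (hnondeg : ∀ x, (∀ y, B x y = 0) → x = 0)
    (L M : Submodule ℤ V) (hfg : L.FG)
    (hspan : Submodule.span ℚ (L : Set V) = ⊤)
    (hint : ∀ x ∈ L, ∀ y ∈ L, ∃ n : ℤ, B x y = (n : ℚ))
    (hM : PrimSub M L) (v : V) (hv : PrimVec (M : Set V) v)
    (γ : ℤ) (hγ : 0 < γ) :
    DivIs B L v γ ↔ PrimVec ((γ : ℚ) • dualSet B L) v := by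
  have hγQ : (γ : ℚ) ≠ 0 := by exact_mod_cast hγ.ne'
  -- v ≠ 0
  have hv0 : v ≠ 0 := by
    intro h
    have h2 : IsUnit (2 : ℤ) := hv.2 2 0 (Submodule.zero_mem M) (by simp [h])
    rw [Int.isUnit_iff] at h2
    omega
  -- characterize membership in γ • dualSet
  have hmemgen : ∀ u : V, u ∈ (γ : ℚ) • dualSet B L ↔
      ∀ l ∈ L, ∃ k : ℤ, B u l = (γ : ℚ) * k := by
    intro u
    constructor
    · rintro ⟨x, hx, rfl⟩ l hl
      obtain ⟨k, hk⟩ := hx l hl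
      exact ⟨k, by simp [hk]⟩
    · intro h
      refine ⟨(γ : ℚ)⁻¹ • u, ?_, ?_⟩
      swap
      · show (γ : ℚ) • ((γ : ℚ)⁻¹ • u) = u
        rw [smul_smul, mul_inv_cancel₀ hγQ, one_smul]
      intro l hl
      obtain ⟨k, hk⟩ := h l hl
      refine ⟨k, ?_⟩
      rw [map_smul, LinearMap.smul_apply, smul_eq_mul, hk]
      field_simp
  -- some l pairs nontrivially with v
  have exl : ∃ l ∈ L, (B v) l ≠ 0 := by
    by_contra h
    push_neg at h
    apply hv0
    apply hnondeg
    intro y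
    have hy : y ∈ Submodule.span ℚ (L : Set V) := by rw [hspan]; trivial
    induction hy using Submodule.span_induction with
    | mem x hx => exact h x hx
    | zero => simp
    | add a b _ _ ha hb => simp [ha, hb]
    | smul c a _ ha => simp [ha]
  -- the ideal of values of B v on L
  let J : Ideal ℤ :=
    { carrier := {m : ℤ | ∃ l ∈ L, (B v) l = (m : ℚ)}
      add_mem' := by
        rintro a b ⟨l, hl, hal⟩ ⟨l', hl', hbl⟩
        exact ⟨l + l', L.add_mem hl hl', by push_cast; simp [hal, hbl]⟩
      zero_mem' := ⟨0, L.zero_mem, by simp⟩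
      smul_mem' := by
        rintro c a ⟨l, hl, hal⟩
        refine ⟨c • l, L.smul_mem c hl, ?_⟩
        rw [map_zsmul, hal, zsmul_eq_mul, smul_eq_mul]
        push_cast
        ring }
  have hJmem : ∀ m : ℤ, m ∈ J ↔ ∃ l ∈ L, (B v) l = (m : ℚ) := fun m => Iff.rfl
  constructor
  · rintro ⟨hdiv1, l, hl, hlγ⟩
    refine ⟨(hmemgen v).mpr hdiv1, ?_⟩
    rintro n w hw rfl
    obtain ⟨k, hk⟩ := (hmemgen w).mp hw l hl
    rw [map_zsmul, LinearMap.smul_apply, hk, zsmul_eq_mul] at hlγ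
    have : (γ : ℚ) * ((n : ℚ) * k - 1) = 0 := by
      linear_combination hlγ
    have hnk : (n : ℚ) * k = 1 := by
      rcases mul_eq_zero.mp this with h | h
      · exact absurd h hγQ
      · linarith
    have : n * k = 1 := by exact_mod_cast hnk
    exact IsUnit.of_mul_eq_one k this
  · rintro ⟨hmem, hprim⟩
    have hdiv1 : ∀ l ∈ L, ∃ k : ℤ, B v l = (γ : ℚ) * k := (hmemgen v).mp hmem
    refine ⟨hdiv1, ?_⟩
    -- J is principal, generated by some g
    obtain ⟨g, hg⟩ := (IsPrincipalIdealRing.principal J).principal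
    have hgJ : g ∈ J := hg ▸ Ideal.mem_span_singleton_self g
    obtain ⟨lg, hlg, hlgval⟩ := hgJ
    -- γ ∣ g
    obtain ⟨k, hk⟩ := hdiv1 lg hlg
    have hgk : g = γ * k := by
      have : (g : ℚ) = (γ : ℚ) * k := by rw [← hlgval, hk]
      exact_mod_cast this
    -- g ≠ 0
    obtain ⟨l₀, hl₀, hl₀ne⟩ := exl
    obtain ⟨m₀, hm₀⟩ := hint v (hM.1 hv.1) l₀ hl₀
    have hm₀J : m₀ ∈ J := ⟨l₀, hl₀, hm₀⟩
    have hm₀ne : m₀ ≠ 0 := by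
      intro h; apply hl₀ne; rw [hm₀, h]; simp
    have hgne : g ≠ 0 := by
      intro h
      rw [hg, h, Submodule.span_zero_singleton] at hm₀J
      exact hm₀ne (by simpa using hm₀J)
    have hkne : k ≠ 0 := by intro h; apply hgne; rw [hgk, h, mul_zero]
    -- the vector w = k⁻¹ • v lies in γ • dualSet
    have hwmem : (k : ℚ)⁻¹ • v ∈ (γ : ℚ) • dualSet B L := by
      rw [hmemgen]
      intro l hl
      obtain ⟨m, hm⟩ := hint v (hM.1 hv.1) l hl
      have hmJ : m ∈ J := ⟨l, hl, hm⟩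
      rw [hg, Submodule.mem_span_singleton] at hmJ
      obtain ⟨j, hj⟩ := hmJ
      rw [smul_eq_mul] at hj
      refine ⟨j, ?_⟩
      rw [map_smul, LinearMap.smul_apply, smul_eq_mul, hm, ← hj, hgk]
      have hkQ : (k : ℚ) ≠ 0 := by exact_mod_cast hkne
      push_cast
      field_simp
    have hvkw : v = k • ((k : ℚ)⁻¹ • v) := by
      rw [← Int.cast_smul_eq_zsmul ℚ, smul_smul,
        mul_inv_cancel₀ (by exact_mod_cast hkne : (k : ℚ) ≠ 0), one_smul]
    have hku : IsUnit k := hprim k _ hwmem hvkw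
    rw [Int.isUnit_iff] at hku
    rcases hku with h1 | h1
    · exact ⟨lg, hlg, by rw [hlgval, hgk, h1]; push_cast; ring⟩
    · refine ⟨-lg, L.neg_mem hlg, ?_⟩
      rw [map_neg, hlgval, hgk, h1]
      push_cast
      ring
end

section
/- Let N be the rank 3 lattice with Gram matrix [[4, 2, −2], [2, −2, −1], [−2, −1, 2]]. Then the quadratic space N ⊗ ℚ₂ over the 2-adic numbers contains no nonzero isotropic vector. Consequently N contains no sublattice isometric to U(k) for any k ≥ 1, where U(k) is the hyperbolic plane rescaled by k. -/
/-- The Gram matrix `[[4, 2, -2], [2, -2, -1], [-2, -1, 2]]`. -/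
def gN3 : Matrix (Fin 3) (Fin 3) ℤ := !![4, 2, -2; 2, -2, -1; -2, -1, 2]

/-- The bilinear form of `gN3` on `ℤ³`. -/
def bfN3 (x y : Fin 3 → ℤ) : ℤ := dotProduct x (Matrix.mulVec gN3 y)

/-- The bilinear form of `gN3` extended to `ℚ₂³`. -/
noncomputable def bfN3Q2 (x y : Fin 3 → ℚ_[2]) : ℚ_[2] :=
  dotProduct x (Matrix.mulVec (gN3.map (Int.cast : ℤ → ℚ_[2])) y)

lemma zmod8 : ∀ x y z : ZMod (2^3), x^2 + z^2 = 3*y^2 → x ≠ 1 ∧ y ≠ 1 ∧ z ≠ 1 := by decide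

lemma aux (u b c t : ℚ_[2]) (ht : t ≠ 0) (h : u^2 + c^2 = 3*b^2)
    (hu : ‖u‖ ≤ ‖t‖) (hb : ‖b‖ ≤ ‖t‖) (hc : ‖c‖ ≤ ‖t‖)
    (hmem : t = u ∨ t = b ∨ t = c) : False := by
  have htn : ‖t‖ ≠ 0 := norm_ne_zero_iff.mpr ht
  have hU : ‖u / t‖ ≤ 1 := by rw [norm_div, div_le_one (lt_of_le_of_ne (norm_nonneg t) (Ne.symm htn))]; exact hu
  have hB : ‖b / t‖ ≤ 1 := by rw [norm_div, div_le_one (lt_of_le_of_ne (norm_nonneg t) (Ne.symm htn))]; exact hb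
  have hC : ‖c / t‖ ≤ 1 := by rw [norm_div, div_le_one (lt_of_le_of_ne (norm_nonneg t) (Ne.symm htn))]; exact hc
  set U : ℤ_[2] := ⟨u / t, hU⟩
  set B : ℤ_[2] := ⟨b / t, hB⟩
  set C : ℤ_[2] := ⟨c / t, hC⟩
  have heq : U^2 + C^2 = 3 * B^2 := by
    apply Subtype.ext
    rw [PadicInt.coe_add, PadicInt.coe_mul, PadicInt.coe_pow, PadicInt.coe_pow, PadicInt.coe_pow]
    push_cast [U, B, C]
    have h3 : ((3:ℤ_[2]):ℚ_[2]) = 3 := by norm_cast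
    rw [h3]
    field_simp
    linear_combination h
  have heq8 : (PadicInt.toZModPow 3 U)^2 + (PadicInt.toZModPow 3 C)^2
      = 3 * (PadicInt.toZModPow 3 B)^2 := by
    have := congrArg (PadicInt.toZModPow (p := 2) 3) heq
    simpa [map_add, map_mul, map_pow, map_ofNat] using this
  have hone : PadicInt.toZModPow (p := 2) 3 U = 1 ∨ PadicInt.toZModPow (p := 2) 3 B = 1
      ∨ PadicInt.toZModPow (p := 2) 3 C = 1 := by
    rcases hmem with rfl | rfl | rfl
    · left
      have : U = 1 := Subtype.ext (by simp [U, div_self ht])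
      rw [this, map_one]
    · right; left
      have : B = 1 := Subtype.ext (by simp [B, div_self ht])
      rw [this, map_one]
    · right; right
      have : C = 1 := Subtype.ext (by simp [C, div_self ht])
      rw [this, map_one]
  obtain ⟨h1, h2, h3⟩ := zmod8 _ _ _ heq8
  tauto

lemma key (u b c : ℚ_[2]) (h : u^2 + c^2 = 3*b^2) : u = 0 ∧ b = 0 ∧ c = 0 := by
  by_contra hne
  have hne' : u ≠ 0 ∨ b ≠ 0 ∨ c ≠ 0 := by tauto
  have hpos : 0 < ‖u‖ ⊔ ‖b‖ ⊔ ‖c‖ := by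
    rcases hne' with hx | hx | hx <;> simp [lt_sup_iff, norm_pos_iff, hx]
  have hmax : ∀ t : ℚ_[2], ‖u‖ ≤ ‖t‖ → ‖b‖ ≤ ‖t‖ → ‖c‖ ≤ ‖t‖ → t ≠ 0 := by
    intro t h1 h2 h3
    rw [← norm_pos_iff]
    exact lt_of_lt_of_le hpos (by simp [h1, h2, h3])
  rcases le_total ‖u‖ ‖b‖ with h1 | h1
  · rcases le_total ‖b‖ ‖c‖ with h2 | h2
    · exact aux u b c c (hmax c (h1.trans h2) h2 le_rfl) h (h1.trans h2) h2 le_rfl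
        (Or.inr (Or.inr rfl))
    · exact aux u b c b (hmax b h1 le_rfl h2) h h1 le_rfl h2 (Or.inr (Or.inl rfl))
  · rcases le_total ‖b‖ ‖c‖ with h2 | h2
    · rcases le_total ‖u‖ ‖c‖ with h3 | h3
      · exact aux u b c c (hmax c h3 h2 le_rfl) h h3 h2 le_rfl (Or.inr (Or.inr rfl))
      · exact aux u b c u (hmax u le_rfl h1 h3) h le_rfl h1 h3 (Or.inl rfl)
    · exact aux u b c u (hmax u le_rfl h1 (h2.trans h1)) h le_rfl h1 (h2.trans h1) (Or.inl rfl)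

lemma qexpand (x : Fin 3 → ℚ_[2]) :
    bfN3Q2 x x = (2*x 0 + x 1 - x 2)^2 + (x 2)^2 - 3*(x 1)^2 := by
  simp [bfN3Q2, gN3, dotProduct, Matrix.mulVec, Fin.sum_univ_three]
  ring

lemma qexpandZ (e : Fin 3 → ℤ) :
    bfN3 e e = (2*e 0 + e 1 - e 2)^2 + (e 2)^2 - 3*(e 1)^2 := by
  simp [bfN3, gN3, dotProduct, Matrix.mulVec, Fin.sum_univ_three]
  ring

lemma aniso : ∀ x : Fin 3 → ℚ_[2], bfN3Q2 x x = 0 → x = 0 := by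
  intro x hx
  rw [qexpand] at hx
  obtain ⟨h1, h2, h3⟩ := key (2*x 0 + x 1 - x 2) (x 1) (x 2) (by linear_combination hx)
  funext i
  have h0 : x 0 = 0 := by linear_combination (h1 - h2 + h3) / 2
  fin_cases i <;> simp [h0, h2, h3]

/-- the quadratic space `N ⊗ ℚ₂` of the rank 3 lattice `N` with Gram
matrix `[[4,2,-2],[2,-2,-1],[-2,-1,2]]` has no nonzero isotropic vector over the
2-adic numbers; consequently `N` contains no sublattice isometric to `U(k)`, `k ≥ 1`. -/
theorem stmt_9 :
    (∀ x : Fin 3 → ℚ_[2], bfN3Q2 x x = 0 → x = 0) ∧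
      ¬∃ (k : ℤ) (e f : Fin 3 → ℤ), 1 ≤ k ∧ LinearIndependent ℤ ![e, f] ∧
          bfN3 e e = 0 ∧ bfN3 f f = 0 ∧ bfN3 e f = k := by
  refine ⟨aniso, ?_⟩
  rintro ⟨k, e, f, hk, hli, hee, -, -⟩
  have hcast : bfN3Q2 (fun i => (e i : ℚ_[2])) (fun i => (e i : ℚ_[2])) = 0 := by
    rw [qexpand]
    rw [qexpandZ] at hee
    have := congrArg (Int.cast : ℤ → ℚ_[2]) hee
    push_cast at this
    linear_combination this
  have := aniso _ hcast
  have he : e = 0 := by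
    funext i
    have : (e i : ℚ_[2]) = 0 := congrFun this i
    exact_mod_cast this
  have := hli.ne_zero 0
  simp [he] at this
end
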